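/- Let V be a finite-dimensional complex vector space and let (F, W) be a Hodge–Tate pair of filtrations on V. Set A_p := F_{-p} ∩ W_{2p} for p ∈ ℤ. Then V is the internal direct sum V = ⊕_{p∈ℤ} A_p; moreover for every p one has F_{-p} = ⊕_{q ≥ p} A_q and W_{2p} = ⊕_{q ≤ p} A_q. (This bigraded splitting of a Hodge–Tate pair is the linear-algebra mechanism behind Proposition 2.13, where the Hodge–Tate condition forces the skewed canonical extension to be a trivial bundle over ℙ¹, i.e. forces speciality.) -/

import Mathlib

/-- A (finite, exhaustive, increasing) filtration of a complex vector space `V`: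
an increasing family of subspaces which is `⊥` for sufficiently small indices
and `⊤` (all of `V`) for sufficiently large indices. -/
def IsFiltrationZ {V : Type*} [AddCommGroup V] [Module ℂ V]
    (G : ℤ → Submodule ℂ V) : Prop :=
  Monotone G ∧ (∃ a : ℤ, ∀ m : ℤ, m ≤ a → G m = ⊥) ∧ (∃ b : ℤ, ∀ m : ℤ, b ≤ m → G m = ⊤)

/-- A pair `(F, W)` of filtrations on `V` is Hodge–Tate if `W_{2i+1} = W_{2i}` for
every `i` and `V` is the internal direct sum of `F_{-j}` and `W_{2j-2}` for every `j`. -/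
def IsHodgeTatePair {V : Type*} [AddCommGroup V] [Module ℂ V]
    (F W : ℤ → Submodule ℂ V) : Prop :=
  IsFiltrationZ F ∧ IsFiltrationZ W ∧
  (∀ i : ℤ, W (2 * i + 1) = W (2 * i)) ∧
  (∀ j : ℤ, F (-j) ⊓ W (2 * j - 2) = ⊥ ∧ F (-j) ⊔ W (2 * j - 2) = ⊤)

/-- For a Hodge–Tate pair `(F, W)` on a finite-dimensional complex vector space `V`,
setting `A_p := F_{-p} ⊓ W_{2p}`, the space `V` is the internal direct sum of the
`A_p`; moreover `F_{-p} = ⊕_{q ≥ p} A_q` and `W_{2p} = ⊕_{q ≤ p} A_q` for every `p`. -/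
theorem hodgeTate_bigraded_splitting {V : Type*} [AddCommGroup V] [Module ℂ V]
    [FiniteDimensional ℂ V] (F W : ℤ → Submodule ℂ V)
    (h : IsHodgeTatePair F W) :
    DirectSum.IsInternal (fun p : ℤ => F (-p) ⊓ W (2 * p)) ∧
    (∀ p : ℤ, F (-p) = ⨆ q : ℤ, ⨆ _ : p ≤ q, F (-q) ⊓ W (2 * q)) ∧
    (∀ p : ℤ, W (2 * p) = ⨆ q : ℤ, ⨆ _ : q ≤ p, F (-q) ⊓ W (2 * q)) := by
  obtain ⟨⟨hFmono, ⟨aF, haF⟩, -⟩, ⟨hWmono, ⟨aW, haW⟩, ⟨bW, hbW⟩⟩, -, hHT⟩ := h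
  set A : ℤ → Submodule ℂ V := fun p => F (-p) ⊓ W (2 * p) with hA
  have hFle : ∀ {p q : ℤ}, p ≤ q → F (-q) ≤ F (-p) := fun hpq => hFmono (by omega)
  have hWle : ∀ {p q : ℤ}, p ≤ q → W p ≤ W q := fun hpq => hWmono hpq
  have hdisj' : ∀ p : ℤ, F (-(p + 1)) ⊓ W (2 * p) = ⊥ := by
    intro p
    have := (hHT (p + 1)).1
    rwa [show (2 * (p + 1) - 2 : ℤ) = 2 * p by ring] at this
  have hsup' : ∀ p : ℤ, F (-(p + 1)) ⊔ W (2 * p) = ⊤ := by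
    intro p
    have := (hHT (p + 1)).2
    rwa [show (2 * (p + 1) - 2 : ℤ) = 2 * p by ring] at this
  -- step lemma for F
  have hF_step : ∀ p : ℤ, F (-p) = A p ⊔ F (-(p + 1)) := by
    intro p
    apply le_antisymm
    · intro x hx
      have hxtop : x ∈ F (-(p + 1)) ⊔ W (2 * p) := by rw [hsup' p]; exact Submodule.mem_top
      obtain ⟨f, hf, w, hw, hfw⟩ := Submodule.mem_sup.mp hxtop
      have hwA : w ∈ A p := by
        refine ⟨?_, hw⟩
        have hwx : w = x - f := by rw [← hfw]; abel
        rw [hwx]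
        exact Submodule.sub_mem _ hx (hFle (by omega) hf)
      rw [← hfw]
      exact Submodule.add_mem _ (Submodule.mem_sup_right hf) (Submodule.mem_sup_left hwA)
    · exact sup_le inf_le_left (hFle (by omega))
  -- step lemma for W
  have hW_step : ∀ p : ℤ, W (2 * p) = A p ⊔ W (2 * p - 2) := by
    intro p
    apply le_antisymm
    · intro x hx
      have hxtop : x ∈ F (-p) ⊔ W (2 * p - 2) := by rw [(hHT p).2]; exact Submodule.mem_top
      obtain ⟨f, hf, w, hw, hfw⟩ := Submodule.mem_sup.mp hxtop
      have hfA : f ∈ A p := by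
        refine ⟨hf, ?_⟩
        have hfx : f = x - w := by rw [← hfw]; abel
        rw [hfx]
        exact Submodule.sub_mem _ hx (hWle (by omega) hw)
      rw [← hfw]
      exact Submodule.add_mem _ (Submodule.mem_sup_left hfA) (Submodule.mem_sup_right hw)
    · exact sup_le inf_le_right (hWle (by omega))
  have hSmono : ∀ {p p' : ℤ}, p ≤ p' →
      (⨆ q : ℤ, ⨆ _ : p' ≤ q, A q) ≤ ⨆ q : ℤ, ⨆ _ : p ≤ q, A q :=
    fun hpp' => iSup₂_le fun q hq => le_iSup₂ (f := fun q (_ : _ ≤ q) => A q) q (hpp'.trans hq)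
  have hTmono : ∀ {p p' : ℤ}, p ≤ p' →
      (⨆ q : ℤ, ⨆ _ : q ≤ p, A q) ≤ ⨆ q : ℤ, ⨆ _ : q ≤ p', A q :=
    fun hpp' => iSup₂_le fun q hq => le_iSup₂ (f := fun q (_ : q ≤ _) => A q) q (hq.trans hpp')
  -- description of F
  have hF_eq : ∀ p : ℤ, F (-p) = ⨆ q : ℤ, ⨆ _ : p ≤ q, A q := by
    have key : ∀ p : ℤ, F (-p) ≤ ⨆ q : ℤ, ⨆ _ : p ≤ q, A q := by
      intro p
      rcases le_or_gt (-aF) p with hp | hp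
      · rw [haF (-p) (by omega)]; exact bot_le
      · refine Int.le_induction_down (motive := fun n _ => F (-n) ≤ ⨆ q : ℤ, ⨆ _ : n ≤ q, A q) ?_ ?_ p hp.le
        · rw [haF (-(-aF)) (by omega)]; exact bot_le
        · intro n _ ih
          rw [hF_step (n - 1), show (n - 1 + 1 : ℤ) = n by ring]
          exact sup_le (le_iSup₂ (f := fun q (_ : n - 1 ≤ q) => A q) (n - 1) le_rfl)
            (ih.trans (hSmono (by omega)))
    exact fun p => le_antisymm (key p) (iSup₂_le fun q hq => inf_le_left.trans (hFle hq))
  -- description of W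
  have hW_eq : ∀ p : ℤ, W (2 * p) = ⨆ q : ℤ, ⨆ _ : q ≤ p, A q := by
    have key : ∀ p : ℤ, W (2 * p) ≤ ⨆ q : ℤ, ⨆ _ : q ≤ p, A q := by
      have hm1 : min aW 0 ≤ aW := min_le_left _ _
      have hm2 : min aW 0 ≤ 0 := min_le_right _ _
      intro p
      rcases le_or_gt p (min aW 0) with hp | hp
      · rw [haW (2 * p) (by omega)]; exact bot_le
      · refine Int.le_induction (motive := fun n _ => W (2 * n) ≤ ⨆ q : ℤ, ⨆ _ : q ≤ n, A q) ?_ ?_ p hp.le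
        · rw [haW (2 * min aW 0) (by omega)]; exact bot_le
        · intro n _ ih
          rw [hW_step (n + 1), show (2 * (n + 1) - 2 : ℤ) = 2 * n by ring]
          exact sup_le (le_iSup₂ (f := fun q (_ : q ≤ n + 1) => A q) (n + 1) le_rfl)
            (ih.trans (hTmono (by omega)))
    exact fun p => le_antisymm (key p)
      (iSup₂_le fun q hq => inf_le_right.trans (hWle (by omega)))
  -- the A p span V
  have hsupA : (⨆ p : ℤ, A p) = ⊤ := by
    refine le_antisymm le_top ?_
    have htop : W (2 * max bW 0) = ⊤ := hbW _ (by
      have := le_max_left bW 0; have := le_max_right bW 0; omega)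
    rw [← htop, hW_eq (max bW 0)]
    exact iSup₂_le fun q _ => le_iSup A q
  -- independence
  have hindep : iSupIndep A := by
    intro p
    rw [disjoint_iff]
    apply le_antisymm _ bot_le
    intro x hx
    obtain ⟨hxA, hxS⟩ := Submodule.mem_inf.mp hx
    have hle : (⨆ q, ⨆ _ : q ≠ p, A q) ≤ F (-(p + 1)) ⊔ W (2 * p - 2) := by
      refine iSup₂_le fun q hq => ?_
      rcases lt_or_gt_of_ne hq with hlt | hgt
      · exact le_sup_of_le_right (inf_le_right.trans (hWle (by omega)))
      · exact le_sup_of_le_left (inf_le_left.trans (hFle (by omega)))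
    obtain ⟨f, hf, w, hw, hfw⟩ := Submodule.mem_sup.mp (hle hxS)
    have hfW : f ∈ W (2 * p) := by
      have hfx : f = x - w := by rw [← hfw]; abel
      rw [hfx]
      exact Submodule.sub_mem _ hxA.2 (hWle (by omega) hw)
    have hf0 : f = 0 := by
      have : f ∈ F (-(p + 1)) ⊓ W (2 * p) := ⟨hf, hfW⟩
      rwa [hdisj' p, Submodule.mem_bot] at this
    have hxw : x = w := by rw [← hfw, hf0, zero_add]
    have : x ∈ F (-p) ⊓ W (2 * p - 2) := ⟨hxA.1, hxw ▸ hw⟩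
    rwa [(hHT p).1] at this
  exact ⟨DirectSum.isInternal_submodule_of_iSupIndep_of_iSup_eq_top hindep hsupA, hF_eq, hW_eq⟩
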